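/- Let n ≥ 1 and d_1, …, d_n ≥ 2 be integers and let D = d_1⋯d_n. If {Ψ_{j1}, …, Ψ_{jD}}, j = 1, …, t, are mutually unbiased orthonormal bases of ℂ^{d_1} ⊗ … ⊗ ℂ^{d_n} ≅ ℂ^D such that every Ψ_{ji} is a product vector, then t ≤ (min_{1 ≤ j ≤ n} d_j) + 1. -/

import Mathlib

open Matrix Finset

/-- A vector of ℂ^{d₁} ⊗ ⋯ ⊗ ℂ^{dₙ} is a product vector. -/
def IsProductVectorMulti {n : ℕ} {d : Fin n → ℕ} (w : ((j : Fin n) → Fin (d j)) → ℂ) : Prop :=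
  ∃ x : (j : Fin n) → Fin (d j) → ℂ, ∀ i, w i = ∏ j, x j (i j)

namespace MubAux

open Submodule Module

variable {n : ℕ} {d : Fin n → ℕ}

lemma inner_factor (x y : (j : Fin n) → Fin (d j) → ℂ) :
    ∑ a : ((j : Fin n) → Fin (d j)),
        (starRingEnd ℂ) (∏ j, x j (a j)) * ∏ j, y j (a j)
      = ∏ j, ∑ k, (starRingEnd ℂ) (x j k) * y j k := by
  rw [Fintype.prod_sum]
  refine Finset.sum_congr rfl fun a _ => ?_
  rw [map_prod, ← Finset.prod_mul_distrib]

/-- A norm-one product vector has a representation with unit-norm factors. -/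
lemma exists_unit_factors (w : ((j : Fin n) → Fin (d j)) → ℂ)
    (hw : ∑ a, (starRingEnd ℂ) (w a) * w a = 1)
    (hp : ∃ x : (j : Fin n) → Fin (d j) → ℂ, ∀ i, w i = ∏ j, x j (i j)) :
    ∃ x : (j : Fin n) → Fin (d j) → ℂ, (∀ a, w a = ∏ j, x j (a j)) ∧
      ∀ j, ∑ k, (starRingEnd ℂ) (x j k) * x j k = 1 := by
  obtain ⟨x₀, h0⟩ := hp
  set s : Fin n → ℝ := fun j => ∑ k, Complex.normSq (x₀ j k) with hs
  have hsC : ∀ j, (s j : ℂ) = ∑ k, (starRingEnd ℂ) (x₀ j k) * x₀ j k := by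
    intro j
    push_cast [hs]
    exact Finset.sum_congr rfl fun k _ => Complex.normSq_eq_conj_mul_self
  have hprod : ∏ j, (s j : ℂ) = 1 := by
    rw [show ∏ j, (s j : ℂ) = ∑ a : ((j : Fin n) → Fin (d j)),
        (starRingEnd ℂ) (∏ j, x₀ j (a j)) * ∏ j, x₀ j (a j) from by
      rw [inner_factor]; exact Finset.prod_congr rfl fun j _ => hsC j]
    rw [← hw]
    exact Finset.sum_congr rfl fun a _ => by rw [h0]
  have hprodR : ∏ j, s j = 1 := by
    have := hprod
    push_cast at this
    exact_mod_cast this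
  have hs0 : ∀ j, 0 ≤ s j := fun j => Finset.sum_nonneg fun k _ => Complex.normSq_nonneg _
  have hspos : ∀ j, 0 < s j := by
    intro j
    rcases (hs0 j).lt_or_eq with h | h
    · exact h
    · exfalso
      have : ∏ j, s j = 0 := Finset.prod_eq_zero (Finset.mem_univ j) h.symm
      rw [hprodR] at this; norm_num at this
  have hsqrtprod : ∏ j, Real.sqrt (s j) = 1 := by
    have h1 : (∏ j, Real.sqrt (s j)) ^ 2 = 1 := by
      rw [← Finset.prod_pow]
      rw [show ∏ j, Real.sqrt (s j) ^ 2 = ∏ j, s j from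
        Finset.prod_congr rfl fun j _ => Real.sq_sqrt (hs0 j), hprodR]
    have h2 : 0 ≤ ∏ j, Real.sqrt (s j) :=
      Finset.prod_nonneg fun j _ => Real.sqrt_nonneg _
    nlinarith [h1, h2]
  refine ⟨fun j k => x₀ j k / (Real.sqrt (s j) : ℂ), fun a => ?_, fun j => ?_⟩
  · rw [h0]
    rw [Finset.prod_div_distrib]
    have : ∏ j, ((Real.sqrt (s j) : ℝ) : ℂ) = 1 := by
      rw [← Complex.ofReal_prod, hsqrtprod, Complex.ofReal_one]
    rw [this, div_one]
  · have hsj : ((Real.sqrt (s j) : ℝ) : ℂ) * ((Real.sqrt (s j) : ℝ) : ℂ) = (s j : ℂ) := by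
      rw [← Complex.ofReal_mul, Real.mul_self_sqrt (hs0 j)]
    have hne : ((Real.sqrt (s j) : ℝ) : ℂ) ≠ 0 := by
      exact_mod_cast Complex.ofReal_ne_zero.mpr (Real.sqrt_pos.mpr (hspos j)).ne'
    calc ∑ k, (starRingEnd ℂ) (x₀ j k / (Real.sqrt (s j) : ℂ)) * (x₀ j k / (Real.sqrt (s j) : ℂ))
        = (∑ k, (starRingEnd ℂ) (x₀ j k) * x₀ j k) / (s j : ℂ) := by
          rw [Finset.sum_div]
          refine Finset.sum_congr rfl fun k _ => ?_
          rw [map_div₀, Complex.conj_ofReal, div_mul_div_comm, hsj]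
      _ = 1 := by rw [← hsC, div_self (by exact_mod_cast (hspos j).ne')]

variable {n : ℕ} {d : Fin n → ℕ}

/-- Columns of a square matrix with orthonormal rows are orthonormal. -/
lemma dual_orth {D : ℕ} (hD : Fintype.card ((j : Fin n) → Fin (d j)) = D)
    (Φ : Fin D → ((j : Fin n) → Fin (d j)) → ℂ)
    (h : ∀ i i', ∑ a, (starRingEnd ℂ) (Φ i a) * Φ i' a = if i = i' then 1 else 0)
    (b b' : (j : Fin n) → Fin (d j)) :
    ∑ i, (starRingEnd ℂ) (Φ i b) * Φ i b' = if b = b' then 1 else 0 := by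
  classical
  let A : Matrix (Fin D) ((j : Fin n) → Fin (d j)) ℂ := fun i a => Φ i a
  have hAA : A * Aᴴ = 1 := by
    ext i i'
    have := h i' i
    simp only [Matrix.mul_apply, Matrix.conjTranspose_apply, Matrix.one_apply]
    calc ∑ a, A i a * star (A i' a) = ∑ a, (starRingEnd ℂ) (Φ i' a) * Φ i a :=
          Finset.sum_congr rfl fun a _ => by simp [A, Complex.star_def, mul_comm]
      _ = if i = i' then 1 else 0 := by rw [this]; simp [eq_comm]
  have e : Fin D ≃ ((j : Fin n) → Fin (d j)) := (Fintype.equivFinOfCardEq hD).symm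
  have hAA' : Aᴴ * A = 1 := (Matrix.mul_eq_one_comm_of_equiv e).mp hAA
  have := congrFun (congrFun hAA' b) b'
  simp only [Matrix.mul_apply, Matrix.conjTranspose_apply, Matrix.one_apply] at this
  calc ∑ i, (starRingEnd ℂ) (Φ i b) * Φ i b'
      = ∑ i, star (A i b) * A i b' := rfl
    _ = if b = b' then 1 else 0 := this

variable {n : ℕ} {d : Fin n → ℕ}

/-- Tight-frame condition for the factor vectors of an orthonormal product family. -/
lemma frame_sum {D : ℕ} (hD : Fintype.card ((j : Fin n) → Fin (d j)) = D)
    (Φ : Fin D → ((j : Fin n) → Fin (d j)) → ℂ)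
    (hcol : ∀ b b' : (j : Fin n) → Fin (d j),
      ∑ i, (starRingEnd ℂ) (Φ i b) * Φ i b' = if b = b' then 1 else 0)
    (x : Fin D → (j : Fin n) → Fin (d j) → ℂ)
    (hx : ∀ i a, Φ i a = ∏ j, x i j (a j))
    (hnorm : ∀ i j, ∑ k, (starRingEnd ℂ) (x i j k) * x i j k = 1)
    (j : Fin n) (p q : Fin (d j)) :
    (d j : ℂ) * ∑ i, (starRingEnd ℂ) (x i j p) * x i j q
      = if p = q then (D : ℂ) else 0 := by
  classical
  have key : ∑ c : ((j : Fin n) → Fin (d j)), ∑ i,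
      (starRingEnd ℂ) (Φ i (Function.update c j p)) * Φ i (Function.update c j q)
      = if p = q then (D : ℂ) else 0 := by
    rw [show (∑ c : ((j : Fin n) → Fin (d j)), ∑ i,
        (starRingEnd ℂ) (Φ i (Function.update c j p)) * Φ i (Function.update c j q))
        = ∑ c : ((j : Fin n) → Fin (d j)),
            (if (Function.update c j p) = (Function.update c j q) then (1:ℂ) else 0) from
      Finset.sum_congr rfl fun c _ => hcol _ _]
    by_cases hpq : p = q
    · subst hpq
      simp [hD]
    · have : ∀ c : ((j : Fin n) → Fin (d j)),
          Function.update c j p ≠ Function.update c j q := by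
        intro c hc
        exact hpq (by simpa using congrFun hc j)
      simp only [hpq, if_false]
      rw [Finset.sum_eq_zero fun c _ => by rw [if_neg (this c)]]
  have expand : ∀ i (c : (j : Fin n) → Fin (d j)),
      (starRingEnd ℂ) (Φ i (Function.update c j p)) * Φ i (Function.update c j q)
      = ((starRingEnd ℂ) (x i j p) * x i j q) *
          ∏ j' ∈ Finset.univ.erase j,
            ((starRingEnd ℂ) (x i j' (c j')) * x i j' (c j')) := by
    intro i c
    rw [hx, hx, map_prod]
    rw [← Finset.mul_prod_erase Finset.univ _ (Finset.mem_univ j),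
        ← Finset.mul_prod_erase Finset.univ
          (fun j' => x i j' (Function.update c j q j')) (Finset.mem_univ j)]
    simp only [Function.update_self]
    rw [mul_mul_mul_comm, ← Finset.prod_mul_distrib]
    congr 1
    refine Finset.prod_congr rfl fun j' hj' => ?_
    rw [Function.update_of_ne (Finset.ne_of_mem_erase hj'),
        Function.update_of_ne (Finset.ne_of_mem_erase hj')]
  have inner_sum : ∀ i, (∑ c : ((j : Fin n) → Fin (d j)),
      ∏ j' ∈ Finset.univ.erase j, ((starRingEnd ℂ) (x i j' (c j')) * x i j' (c j')))
      = (d j : ℂ) := by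
    intro i
    have hf := Fintype.prod_sum (fun (j' : Fin n) (k : Fin (d j')) =>
      if j' = j then (1:ℂ) else (starRingEnd ℂ) (x i j' k) * x i j' k)
    have h1 : ∀ c : ((j : Fin n) → Fin (d j)),
        (∏ j', (if j' = j then (1:ℂ)
            else (starRingEnd ℂ) (x i j' (c j')) * x i j' (c j')))
        = ∏ j' ∈ Finset.univ.erase j,
            ((starRingEnd ℂ) (x i j' (c j')) * x i j' (c j')) := by
      intro c
      rw [← Finset.mul_prod_erase Finset.univ _ (Finset.mem_univ j), if_pos rfl, one_mul]
      exact Finset.prod_congr rfl fun j' hj' => if_neg (Finset.ne_of_mem_erase hj')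
    calc (∑ c : ((j : Fin n) → Fin (d j)),
        ∏ j' ∈ Finset.univ.erase j, ((starRingEnd ℂ) (x i j' (c j')) * x i j' (c j')))
        = ∑ c : ((j : Fin n) → Fin (d j)),
            ∏ j', (if j' = j then (1:ℂ)
              else (starRingEnd ℂ) (x i j' (c j')) * x i j' (c j')) :=
          Finset.sum_congr rfl fun c _ => (h1 c).symm
      _ = ∏ j', ∑ k, (if j' = j then (1:ℂ)
              else (starRingEnd ℂ) (x i j' k) * x i j' k) := hf.symm
      _ = (d j : ℂ) := by
          rw [← Finset.mul_prod_erase Finset.univ _ (Finset.mem_univ j)]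
          rw [show (∑ k : Fin (d j), (if j = j then (1:ℂ)
              else (starRingEnd ℂ) (x i j k) * x i j k)) = (d j : ℂ) by simp]
          rw [Finset.prod_eq_one fun j' hj' => ?_, mul_one]
          simp only [if_neg (Finset.ne_of_mem_erase hj')]
          exact hnorm i j'
  calc (d j : ℂ) * ∑ i, (starRingEnd ℂ) (x i j p) * x i j q
      = ∑ i, ((starRingEnd ℂ) (x i j p) * x i j q) * (d j : ℂ) := by
        rw [Finset.mul_sum]
        exact Finset.sum_congr rfl fun i _ => mul_comm _ _
    _ = ∑ i, ∑ c : ((j : Fin n) → Fin (d j)),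
        (starRingEnd ℂ) (Φ i (Function.update c j p)) * Φ i (Function.update c j q) := by
        refine Finset.sum_congr rfl fun i _ => ?_
        rw [Finset.sum_congr rfl fun c _ => expand i c, ← Finset.mul_sum, inner_sum i]
    _ = if p = q then (D : ℂ) else 0 := by rw [Finset.sum_comm]; exact key

lemma cs_le_one {m : ℕ} (u v : Fin m → ℂ)
    (hu : ∑ k, (starRingEnd ℂ) (u k) * u k = 1)
    (hv : ∑ k, (starRingEnd ℂ) (v k) * v k = 1) :
    Complex.normSq (∑ k, (starRingEnd ℂ) (u k) * v k) ≤ 1 := by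
  let U : EuclideanSpace ℂ (Fin m) := (WithLp.equiv 2 _).symm u
  let V : EuclideanSpace ℂ (Fin m) := (WithLp.equiv 2 _).symm v
  have hinner : ∀ (a b : Fin m → ℂ),
      (inner ℂ ((WithLp.equiv 2 _).symm a) ((WithLp.equiv 2 _).symm b) : ℂ)
        = ∑ k, (starRingEnd ℂ) (a k) * b k := by
    intro a b
    rw [PiLp.inner_apply]
    exact Finset.sum_congr rfl fun k _ => by simp [mul_comm]
  have hUV : (inner ℂ U V : ℂ) = ∑ k, (starRingEnd ℂ) (u k) * v k := hinner u v
  have hUnorm : ‖U‖ = 1 := by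
    have h1 : (inner ℂ U U : ℂ) = 1 := by rw [hinner u u, hu]
    have h2 : (inner ℂ U U : ℂ) = (‖U‖ : ℂ) ^ 2 := inner_self_eq_norm_sq_to_K U
    have : (‖U‖ : ℝ) ^ 2 = 1 := by
      have := h2.symm.trans h1
      exact_mod_cast this
    nlinarith [norm_nonneg U]
  have hVnorm : ‖V‖ = 1 := by
    have h1 : (inner ℂ V V : ℂ) = 1 := by rw [hinner v v, hv]
    have h2 : (inner ℂ V V : ℂ) = (‖V‖ : ℂ) ^ 2 := inner_self_eq_norm_sq_to_K V
    have : (‖V‖ : ℝ) ^ 2 = 1 := by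
      have := h2.symm.trans h1
      exact_mod_cast this
    nlinarith [norm_nonneg V]
  have hcs := norm_inner_le_norm (𝕜 := ℂ) U V
  rw [hUnorm, hVnorm, hUV] at hcs
  have : ‖∑ k, (starRingEnd ℂ) (u k) * v k‖ ≤ 1 := by simpa using hcs
  rw [← Complex.sq_norm]
  nlinarith [norm_nonneg (∑ k, (starRingEnd ℂ) (u k) * v k)]

variable {n : ℕ} {d : Fin n → ℕ}

/-- The key rigidity: factors of two mutually unbiased product families are unbiased. -/
lemma factor_unbiased {D : ℕ} (hD : (∏ j, d j) = D) (hD0 : 0 < D)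
    (x y : Fin D → (j : Fin n) → Fin (d j) → ℂ)
    (hxnorm : ∀ i j, ∑ k, (starRingEnd ℂ) (x i j k) * x i j k = 1)
    (hynorm : ∀ i j, ∑ k, (starRingEnd ℂ) (y i j k) * y i j k = 1)
    (hyframe : ∀ (j : Fin n) (p q : Fin (d j)),
      (d j : ℂ) * ∑ i, (starRingEnd ℂ) (y i j p) * y i j q = if p = q then (D : ℂ) else 0)
    (hm : ∀ i i', ‖∏ j, ∑ k, (starRingEnd ℂ) (x i j k) * y i' j k‖
      = 1 / Real.sqrt D)
    (i i' : Fin D) (j : Fin n) :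
    Complex.normSq (∑ k, (starRingEnd ℂ) (x i j k) * y i' j k) = 1 / (d j) := by
  classical
  have hdpos : ∀ j : Fin n, 0 < d j := by
    intro j
    rcases Nat.eq_zero_or_pos (d j) with h | h
    · exfalso
      rw [← hD, Finset.prod_eq_zero (Finset.mem_univ j) h] at hD0
      exact lt_irrefl 0 hD0
    · exact h
  set S : Fin D → Fin n → ℂ := fun i' j => ∑ k, (starRingEnd ℂ) (x i j k) * y i' j k with hS
  set f : Fin D → Fin n → ℝ := fun i' j => Complex.normSq (S i' j) with hf
  have hfprod : ∀ i', ∏ j, f i' j = 1 / D := by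
    intro i'
    have h1 : ∏ j, f i' j = Complex.normSq (∏ j, S i' j) := (map_prod Complex.normSq _ _).symm
    rw [h1, ← Complex.sq_norm, hm i i']
    rw [div_pow, one_pow, Real.sq_sqrt (Nat.cast_nonneg D)]
  have hfle : ∀ i' j, f i' j ≤ 1 := fun i' j => cs_le_one _ _ (hxnorm i j) (hynorm i' j)
  have hfpos : ∀ i' j, 0 < f i' j := by
    intro i' j
    rcases (Complex.normSq_nonneg (S i' j)).lt_or_eq with h | h
    · exact h
    · exfalso
      have h0 : ∏ j, f i' j = 0 := Finset.prod_eq_zero (Finset.mem_univ j) h.symm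
      rw [hfprod i'] at h0
      have hD' : (D:ℝ) ≠ 0 := Nat.cast_ne_zero.mpr hD0.ne'
      field_simp at h0
      simp at h0
  have hframe : ∀ j, (d j : ℝ) * ∑ i'', f i'' j = D := by
    intro j
    have hC : (d j : ℂ) * ∑ i'', (starRingEnd ℂ) (S i'' j) * S i'' j = (D : ℂ) := by
      have expand : ∀ i'', (starRingEnd ℂ) (S i'' j) * S i'' j
          = ∑ p, ∑ q, (x i j p * (starRingEnd ℂ) (y i'' j p)) *
              ((starRingEnd ℂ) (x i j q) * y i'' j q) := by
        intro i''
        rw [hS]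
        simp only [map_sum, _root_.map_mul, RingHomCompTriple.comp_apply, RingHom.id_apply,
          Complex.conj_conj]
        rw [Finset.sum_mul_sum]
      rw [Finset.sum_congr rfl fun i'' _ => expand i'']
      have swap : (∑ i'' : Fin D, ∑ p, ∑ q, (x i j p * (starRingEnd ℂ) (y i'' j p)) *
            ((starRingEnd ℂ) (x i j q) * y i'' j q))
          = ∑ p, ∑ q, ∑ i'' : Fin D, (x i j p * (starRingEnd ℂ) (y i'' j p)) *
            ((starRingEnd ℂ) (x i j q) * y i'' j q) := by
        rw [Finset.sum_comm]
        exact Finset.sum_congr rfl fun p _ => Finset.sum_comm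
      rw [swap, Finset.mul_sum]
      have hq : ∀ p, ((d j : ℂ) * ∑ q, ∑ i'', (x i j p * (starRingEnd ℂ) (y i'' j p)) *
            ((starRingEnd ℂ) (x i j q) * y i'' j q))
          = (x i j p * (starRingEnd ℂ) (x i j p)) * D := by
        intro p
        calc (d j : ℂ) * ∑ q, ∑ i'', (x i j p * (starRingEnd ℂ) (y i'' j p)) *
              ((starRingEnd ℂ) (x i j q) * y i'' j q)
            = ∑ q, (x i j p * (starRingEnd ℂ) (x i j q)) *
                ((d j : ℂ) * ∑ i'', (starRingEnd ℂ) (y i'' j p) * y i'' j q) := by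
              rw [Finset.mul_sum]
              refine Finset.sum_congr rfl fun q _ => ?_
              rw [Finset.mul_sum, Finset.mul_sum, Finset.mul_sum]
              exact Finset.sum_congr rfl fun i'' _ => by ring
          _ = ∑ q, (x i j p * (starRingEnd ℂ) (x i j q)) *
                (if p = q then (D:ℂ) else 0) := by
              exact Finset.sum_congr rfl fun q _ => by rw [hyframe j p q]
          _ = (x i j p * (starRingEnd ℂ) (x i j p)) * D := by
              rw [Finset.sum_eq_single p]
              · simp
              · intro q _ hqp
                rw [if_neg fun h => hqp h.symm, mul_zero]
              · intro h; exact absurd (Finset.mem_univ p) h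
      rw [Finset.sum_congr rfl fun p _ => hq p, ← Finset.sum_mul]
      rw [show (∑ p, x i j p * (starRingEnd ℂ) (x i j p)) = 1 from by
        rw [← hxnorm i j]; exact Finset.sum_congr rfl fun p _ => mul_comm _ _]
      rw [one_mul]
    have hcast : ∀ i'', (starRingEnd ℂ) (S i'' j) * S i'' j = ((f i'' j : ℝ) : ℂ) := by
      intro i''
      rw [hf]
      exact Complex.normSq_eq_conj_mul_self.symm
    rw [Finset.sum_congr rfl fun i'' _ => hcast i''] at hC
    have : (((d j : ℝ) * ∑ i'', f i'' j : ℝ) : ℂ) = ((D : ℝ) : ℂ) := by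
      push_cast
      push_cast at hC
      exact hC
    exact_mod_cast this
  -- now the convexity/log argument
  set g : Fin D → Fin n → ℝ := fun i'' j => (d j : ℝ) * f i'' j with hg
  have hgpos : ∀ i'' j, 0 < g i'' j := fun i'' j =>
    mul_pos (by exact_mod_cast hdpos j) (hfpos i'' j)
  have hDprod : (D : ℝ) = ∏ j, (d j : ℝ) := by rw [← hD]; push_cast; ring
  have hgprod : ∀ i'', ∏ j, g i'' j = 1 := by
    intro i''
    rw [hg]
    simp only
    rw [Finset.prod_mul_distrib, ← hDprod, hfprod i'']
    field_simp
  have hgsum : ∀ j, ∑ i'', g i'' j = D := by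
    intro j
    rw [hg]
    simp only
    rw [← Finset.mul_sum]
    exact hframe j
  have hlog0 : ∀ i'', ∑ j, Real.log (g i'' j) = 0 := by
    intro i''
    rw [← Real.log_prod fun j _ => (hgpos i'' j).ne', hgprod i'', Real.log_one]
  set T : Fin D → ℝ := fun i'' => ∑ j, (g i'' j - 1) with hT
  have hT0 : ∀ i'', 0 ≤ T i'' := by
    intro i''
    rw [hT]
    simp only
    rw [← hlog0 i'']
    exact Finset.sum_le_sum fun j _ => Real.log_le_sub_one_of_pos (hgpos i'' j)
  have hTsum : ∑ i'', T i'' = 0 := by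
    rw [hT]
    simp only
    rw [Finset.sum_comm]
    rw [Finset.sum_eq_zero]
    intro j _
    rw [Finset.sum_sub_distrib, hgsum j]
    simp
  have hTzero : ∀ i'', T i'' = 0 := by
    intro i''
    have := (Finset.sum_eq_zero_iff_of_nonneg fun i'' _ => hT0 i'').mp hTsum
    exact this i'' (Finset.mem_univ i'')
  have hgone : g i' j = 1 := by
    by_contra hne
    have hstrict : Real.log (g i' j) < g i' j - 1 :=
      Real.log_lt_sub_one_of_pos (hgpos i' j) hne
    have hsum_lt : ∑ j', Real.log (g i' j') < ∑ j', (g i' j' - 1) := by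
      apply Finset.sum_lt_sum (fun j' _ => Real.log_le_sub_one_of_pos (hgpos i' j'))
      exact ⟨j, Finset.mem_univ j, hstrict⟩
    rw [hlog0 i'] at hsum_lt
    have h0 : ∑ j' : Fin n, (g i' j' - 1) = 0 := hTzero i'
    linarith
  have : (d j : ℝ) * f i' j = 1 := hgone
  have hdj : (d j : ℝ) ≠ 0 := by exact_mod_cast (hdpos j).ne'
  field_simp [hf] at this ⊢
  linarith [this]

/-- rank-one "matrix" of a vector, as an element of a function space. -/
def Mfun {m : ℕ} (z : Fin m → ℂ) : Fin m × Fin m → ℂ :=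
  fun pq => (starRingEnd ℂ) (z pq.1) * z pq.2

lemma single_eq_if {m : ℕ} (q : Fin m) :
    (fun j => if q = j then (1:ℂ) else 0) = Pi.single q 1 := by
  funext j
  rw [Pi.single_apply]
  simp [eq_comm]

lemma mfun_li {m : ℕ} {ι : Type*} [Fintype ι] [DecidableEq ι]
    (b : Basis ι ℂ (Fin m → ℂ)) :
    LinearIndependent ℂ (fun l => Mfun (b l)) := by
  rw [Fintype.linearIndependent_iff]
  intro c hc l₀
  set φ : (Fin m → ℂ) →ₗ[ℂ] ℂ := b.coord l₀ with hφ
  set cj : Fin m → ℂ := fun q => φ (Pi.single q 1) with hcj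
  have hdual : ∀ l : ι, ∑ q, b l q * cj q = if l = l₀ then 1 else 0 := by
    intro l
    have h1 : φ (b l) = if l = l₀ then 1 else 0 := by
      rw [hφ, Basis.coord_apply, Basis.repr_self]
      simp [Finsupp.single_apply, eq_comm]
    rw [← h1, φ.pi_apply_eq_sum_univ (b l)]
    exact Finset.sum_congr rfl fun q _ => by rw [smul_eq_mul, single_eq_if q]
  have hzero : ∀ p, c l₀ * (starRingEnd ℂ) (b l₀ p) = 0 := by
    intro p
    have h2 : ∀ q, (∑ l, c l • Mfun (b l)) (p, q) = 0 := fun q => by rw [hc]; rfl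
    have h3 : ∀ q, ∑ l, c l * ((starRingEnd ℂ) (b l p) * b l q) = 0 := by
      intro q
      have := h2 q
      rw [Finset.sum_apply] at this
      simpa [Mfun] using this
    have h4 : ∑ q, (∑ l, c l * ((starRingEnd ℂ) (b l p) * b l q)) * cj q = 0 := by
      rw [Finset.sum_eq_zero fun q _ => by rw [h3 q, zero_mul]]
    rw [show (∑ q, (∑ l, c l * ((starRingEnd ℂ) (b l p) * b l q)) * cj q)
        = ∑ l, (c l * (starRingEnd ℂ) (b l p)) * ∑ q, b l q * cj q from by
      rw [Finset.sum_congr rfl fun q (_ : q ∈ Finset.univ) => Finset.sum_mul _ _ (cj q)]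
      rw [Finset.sum_comm]
      refine Finset.sum_congr rfl fun l _ => ?_
      rw [Finset.mul_sum]
      refine Finset.sum_congr rfl fun q _ => by ring] at h4
    rw [Finset.sum_congr rfl fun l _ => by rw [hdual l]] at h4
    rw [Finset.sum_eq_single l₀ (fun l _ hl => by rw [if_neg hl, mul_zero])
      (fun h => absurd (Finset.mem_univ l₀) h)] at h4
    simpa using h4
  by_contra hc0
  have : ∀ p, (starRingEnd ℂ) (b l₀ p) = 0 := by
    intro p
    have := hzero p
    rcases mul_eq_zero.mp this with h | h
    · exact absurd h hc0
    · exact h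
  have hb0 : b l₀ = 0 := by
    funext p
    have := this p
    simpa using congrArg (starRingEnd ℂ) this
  exact b.ne_zero l₀ hb0

lemma span_top_of_frame {m D : ℕ} (hD0 : 0 < D) (y : Fin D → Fin m → ℂ)
    (hframe : ∀ p q, (m : ℂ) * ∑ i, (starRingEnd ℂ) (y i p) * y i q
      = if p = q then (D : ℂ) else 0) :
    Submodule.span ℂ (Set.range y) = ⊤ := by
  by_contra hlt
  have hlt' : Submodule.span ℂ (Set.range y) < ⊤ := lt_of_le_of_ne le_top hlt
  obtain ⟨φ, hφne, hφ⟩ :=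
    Submodule.exists_dual_map_eq_bot_of_lt_top hlt' inferInstance
  have hy0 : ∀ i, φ (y i) = 0 := by
    intro i
    have : φ (y i) ∈ Submodule.map φ (Submodule.span ℂ (Set.range y)) :=
      Submodule.mem_map_of_mem (Submodule.subset_span (Set.mem_range_self i))
    rw [hφ] at this
    simpa using this
  set c : Fin m → ℂ := fun q => φ (Pi.single q 1) with hc
  have hφc : ∀ v : Fin m → ℂ, φ v = ∑ q, v q * c q := by
    intro v
    rw [φ.pi_apply_eq_sum_univ v]
    exact Finset.sum_congr rfl fun q _ => by rw [smul_eq_mul, single_eq_if q]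
  have hkey : (D : ℂ) * ∑ p, (starRingEnd ℂ) (c p) * c p = 0 := by
    have h1 : ∀ i, (starRingEnd ℂ) (φ (y i)) * φ (y i)
        = ∑ p, ∑ q, ((starRingEnd ℂ) (c p) * c q) *
            ((starRingEnd ℂ) (y i p) * y i q) := by
      intro i
      rw [hφc (y i), map_sum, Finset.sum_mul_sum]
      refine Finset.sum_congr rfl fun p _ => Finset.sum_congr rfl fun q _ => ?_
      rw [_root_.map_mul]
      ring
    have h2 : (m : ℂ) * ∑ i, (starRingEnd ℂ) (φ (y i)) * φ (y i) = 0 := by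
      rw [Finset.sum_eq_zero fun i _ => by rw [hy0 i, map_zero, mul_zero], mul_zero]
    rw [Finset.sum_congr rfl fun i _ => h1 i] at h2
    have swap : (∑ i : Fin D, ∑ p, ∑ q, ((starRingEnd ℂ) (c p) * c q) *
          ((starRingEnd ℂ) (y i p) * y i q))
        = ∑ p, ∑ q, ((starRingEnd ℂ) (c p) * c q) *
            ∑ i, (starRingEnd ℂ) (y i p) * y i q := by
      rw [Finset.sum_comm]
      refine Finset.sum_congr rfl fun p _ => ?_
      rw [Finset.sum_comm]
      exact Finset.sum_congr rfl fun q _ => (Finset.mul_sum _ _ _).symm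
    rw [swap] at h2
    have h3 : ∑ p, ∑ q, ((starRingEnd ℂ) (c p) * c q) *
        ((m : ℂ) * ∑ i, (starRingEnd ℂ) (y i p) * y i q) = 0 := by
      rw [← h2, Finset.mul_sum]
      refine Finset.sum_congr rfl fun p _ => ?_
      rw [Finset.mul_sum]
      exact Finset.sum_congr rfl fun q _ => by ring
    rw [Finset.sum_congr rfl fun p _ => Finset.sum_congr rfl fun q _ => by
      rw [hframe p q]] at h3
    rw [← h3, Finset.mul_sum]
    refine Finset.sum_congr rfl fun p _ => ?_
    rw [Finset.sum_eq_single p (fun q _ hq => by rw [if_neg fun h => hq h.symm, mul_zero])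
      (fun h => absurd (Finset.mem_univ p) h)]
    rw [if_pos rfl]
    ring
  have hcz : ∀ p, c p = 0 := by
    have hD' : (D : ℂ) ≠ 0 := Nat.cast_ne_zero.mpr hD0.ne'
    have h4 : ∑ p, (starRingEnd ℂ) (c p) * c p = 0 :=
      (mul_eq_zero.mp hkey).resolve_left hD'
    have h5 : ∑ p, Complex.normSq (c p) = 0 := by
      have : ((∑ p, Complex.normSq (c p) : ℝ) : ℂ) = 0 := by
        push_cast
        rw [← h4]
        exact Finset.sum_congr rfl fun p _ => Complex.normSq_eq_conj_mul_self
      exact_mod_cast this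
    intro p
    have := (Finset.sum_eq_zero_iff_of_nonneg
      (fun p _ => Complex.normSq_nonneg (c p))).mp h5 p (Finset.mem_univ p)
    exact Complex.normSq_eq_zero.mp this
  apply hφne
  apply LinearMap.ext
  intro v
  rw [hφc v]
  simp [hcz]

def Efun {m : ℕ} : Fin m × Fin m → ℂ := fun pq => if pq.1 = pq.2 then 1 else 0

noncomputable def Bf {m : ℕ} (u v : Fin m × Fin m → ℂ) : ℂ :=
  ∑ pq, (starRingEnd ℂ) (u pq) * v pq

lemma Bf_smul_left {m : ℕ} (c : ℂ) (u v : Fin m × Fin m → ℂ) :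
    Bf (c • u) v = (starRingEnd ℂ) c * Bf u v := by
  simp [Bf, Finset.mul_sum]
  exact Finset.sum_congr rfl fun pq _ => by ring

lemma Bf_smul_right {m : ℕ} (c : ℂ) (u v : Fin m × Fin m → ℂ) :
    Bf u (c • v) = c * Bf u v := by
  simp [Bf, Finset.mul_sum]
  exact Finset.sum_congr rfl fun pq _ => by ring

lemma Bf_sub_left {m : ℕ} (u u' v : Fin m × Fin m → ℂ) :
    Bf (u - u') v = Bf u v - Bf u' v := by
  simp [Bf, sub_mul, Finset.sum_sub_distrib]

lemma Bf_sub_right {m : ℕ} (u v v' : Fin m × Fin m → ℂ) :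
    Bf u (v - v') = Bf u v - Bf u v' := by
  simp [Bf, mul_sub, Finset.sum_sub_distrib]

lemma Bf_mfun_mfun {m : ℕ} (z w : Fin m → ℂ) :
    Bf (Mfun z) (Mfun w)
      = ((Complex.normSq (∑ k, (starRingEnd ℂ) (z k) * w k) : ℝ) : ℂ) := by
  rw [Complex.normSq_eq_conj_mul_self]
  unfold Bf Mfun
  rw [Fintype.sum_prod_type, map_sum, Finset.sum_mul_sum]
  refine Finset.sum_congr rfl fun p _ => Finset.sum_congr rfl fun q _ => ?_
  simp only [_root_.map_mul, Complex.conj_conj]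
  ring

lemma Bf_mfun_E {m : ℕ} (z : Fin m → ℂ)
    (hz : ∑ k, (starRingEnd ℂ) (z k) * z k = 1) :
    Bf (Mfun z) (Efun (m := m)) = 1 := by
  unfold Bf Mfun Efun
  rw [Fintype.sum_prod_type]
  rw [Finset.sum_congr rfl fun p (_ : p ∈ Finset.univ) =>
    Finset.sum_eq_single p (fun q _ hq => by
        simp only [_root_.map_mul, Complex.conj_conj]
        rw [if_neg fun h => hq h.symm, mul_zero])
      (fun h => absurd (Finset.mem_univ p) h)]
  simp only [_root_.map_mul, Complex.conj_conj, eq_self_iff_true, if_true, mul_one]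
  calc ∑ p, z p * (starRingEnd ℂ) (z p)
      = ∑ p, (starRingEnd ℂ) (z p) * z p := Finset.sum_congr rfl fun p _ => mul_comm _ _
    _ = 1 := hz

lemma Bf_E_mfun {m : ℕ} (w : Fin m → ℂ)
    (hw : ∑ k, (starRingEnd ℂ) (w k) * w k = 1) :
    Bf (Efun (m := m)) (Mfun w) = 1 := by
  unfold Bf Mfun Efun
  rw [Fintype.sum_prod_type]
  rw [Finset.sum_congr rfl fun p (_ : p ∈ Finset.univ) =>
    Finset.sum_eq_single p (fun q _ hq => by
        rw [if_neg fun h => hq h.symm]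
        simp)
      (fun h => absurd (Finset.mem_univ p) h)]
  simp only [eq_self_iff_true, if_true, _root_.map_one, one_mul]
  exact hw

lemma Bf_E_E {m : ℕ} : Bf (Efun (m := m)) (Efun (m := m)) = (m : ℂ) := by
  unfold Bf Efun
  rw [Fintype.sum_prod_type]
  rw [Finset.sum_congr rfl fun p (_ : p ∈ Finset.univ) =>
    Finset.sum_eq_single p (fun q _ hq => by
        rw [if_neg fun h => hq h.symm]
        simp)
      (fun h => absurd (Finset.mem_univ p) h)]
  simp

lemma conj_inv_nat (m : ℕ) : (starRingEnd ℂ) ((m : ℂ))⁻¹ = ((m : ℂ))⁻¹ := by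
  rw [map_inv₀, map_natCast]

lemma gen_orth {m : ℕ} (hm0 : 0 < m) (z w : Fin m → ℂ)
    (hz : ∑ k, (starRingEnd ℂ) (z k) * z k = 1)
    (hw : ∑ k, (starRingEnd ℂ) (w k) * w k = 1)
    (hzw : Complex.normSq (∑ k, (starRingEnd ℂ) (z k) * w k) = 1 / m) :
    Bf (Mfun z - ((m : ℂ))⁻¹ • Efun) (Mfun w - ((m : ℂ))⁻¹ • Efun) = 0 := by
  rw [Bf_sub_left, Bf_sub_right, Bf_sub_right, Bf_smul_left, Bf_smul_left,
    Bf_smul_right, Bf_smul_right, Bf_mfun_mfun, Bf_mfun_E z hz, Bf_E_mfun w hw,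
    Bf_E_E, conj_inv_nat, hzw]
  have hmne : (m : ℂ) ≠ 0 := Nat.cast_ne_zero.mpr hm0.ne'
  push_cast
  field_simp
  simp

lemma gen_E_orth {m : ℕ} (hm0 : 0 < m) (z : Fin m → ℂ)
    (hz : ∑ k, (starRingEnd ℂ) (z k) * z k = 1) :
    Bf (Mfun z - ((m : ℂ))⁻¹ • Efun) (Efun (m := m)) = 0 := by
  rw [Bf_sub_left, Bf_smul_left, Bf_mfun_E z hz, Bf_E_E, conj_inv_nat]
  have hmne : (m : ℂ) ≠ 0 := Nat.cast_ne_zero.mpr hm0.ne'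
  field_simp
  simp

lemma rank_lower {m D : ℕ} (hD0 : 0 < D) (y : Fin D → Fin m → ℂ)
    (hframe : ∀ p q, (m : ℂ) * ∑ i, (starRingEnd ℂ) (y i p) * y i q
      = if p = q then (D : ℂ) else 0)
    (E : Fin m × Fin m → ℂ) :
    m ≤ finrank ℂ (span ℂ (Set.range (fun i => Mfun (y i) - E))) + 1 := by
  classical
  have hspan := span_top_of_frame hD0 y hframe
  obtain ⟨s, hs_sub, hs_span, hs_li⟩ := exists_linearIndependent ℂ (Set.range y)
  rw [hspan] at hs_span
  have hfin : s.Finite := (Set.finite_range y).subset hs_sub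
  have : Fintype s := hfin.fintype
  let b : Basis s ℂ (Fin m → ℂ) := Basis.mk hs_li (by rw [Subtype.range_coe, hs_span])
  have hcard : Fintype.card s = m := by
    rw [← Module.finrank_eq_card_basis b, Module.finrank_pi, Fintype.card_fin]
  -- linearly independent rank-one family
  have hli : LinearIndependent ℂ (fun l : s => Mfun (b l)) := mfun_li b
  have hrankT : finrank ℂ (span ℂ (Set.range (fun l : s => Mfun (b l)))) = m := by
    rw [finrank_span_eq_card hli, hcard]
  -- T ≤ U ⊔ ℂ ∙ E
  set U := span ℂ (Set.range (fun i => Mfun (y i) - E)) with hU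
  have hTle : span ℂ (Set.range (fun l : s => Mfun (b l))) ≤ U ⊔ (ℂ ∙ E) := by
    rw [span_le]
    rintro _ ⟨l, rfl⟩
    have hbl2 : b l = (l : Fin m → ℂ) := Basis.mk_apply _ _ l
    obtain ⟨i, hi⟩ := hs_sub l.2
    have key : (fun l : s => Mfun (b l)) l = (Mfun (y i) - E) + E := by
      simp only [hbl2, ← hi]
      ring
    rw [key]
    exact Submodule.add_mem _
      (Submodule.mem_sup_left (subset_span (Set.mem_range_self i)))
      (Submodule.mem_sup_right (Submodule.mem_span_singleton_self E))
  have h1 : m ≤ finrank ℂ (U ⊔ (ℂ ∙ E) : Submodule ℂ (Fin m × Fin m → ℂ)) :=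
    calc m = finrank ℂ (span ℂ (Set.range (fun l : s => Mfun (b l)))) := hrankT.symm
      _ ≤ _ := Submodule.finrank_mono hTle
  have h2 : finrank ℂ (U ⊔ (ℂ ∙ E) : Submodule ℂ (Fin m × Fin m → ℂ))
      ≤ finrank ℂ U + finrank ℂ (ℂ ∙ E : Submodule ℂ (Fin m × Fin m → ℂ)) := by
    have := Submodule.finrank_sup_add_finrank_inf_eq U (ℂ ∙ E)
    omega
  have h3 : finrank ℂ (ℂ ∙ E : Submodule ℂ (Fin m × Fin m → ℂ)) ≤ 1 := by
    rcases eq_or_ne E 0 with h | h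
    · subst h
      rw [Submodule.span_zero_singleton]
      simp
    · rw [finrank_span_singleton h]
  omega

lemma Bf_add_left {m : ℕ} (u u' v : Fin m × Fin m → ℂ) :
    Bf (u + u') v = Bf u v + Bf u' v := by
  simp [Bf, add_mul, Finset.sum_add_distrib]

lemma Bf_add_right {m : ℕ} (u v v' : Fin m × Fin m → ℂ) :
    Bf u (v + v') = Bf u v + Bf u v' := by
  simp [Bf, mul_add, Finset.sum_add_distrib]

lemma Bf_zero_left {m : ℕ} (v : Fin m × Fin m → ℂ) : Bf 0 v = 0 := by simp [Bf]

lemma Bf_zero_right {m : ℕ} (u : Fin m × Fin m → ℂ) : Bf u 0 = 0 := by simp [Bf]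

lemma Bf_sum_right {m : ℕ} {ι : Type*} (s : Finset ι) (u : Fin m × Fin m → ℂ)
    (f : ι → Fin m × Fin m → ℂ) :
    Bf u (∑ i ∈ s, f i) = ∑ i ∈ s, Bf u (f i) := by
  unfold Bf
  rw [Finset.sum_comm]
  refine Finset.sum_congr rfl fun pq _ => ?_
  rw [Finset.sum_apply, Finset.mul_sum]

lemma Bf_self_eq_zero {m : ℕ} {v : Fin m × Fin m → ℂ} (h : Bf v v = 0) : v = 0 := by
  have h5 : ∑ pq, Complex.normSq (v pq) = 0 := by
    have : ((∑ pq, Complex.normSq (v pq) : ℝ) : ℂ) = 0 := by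
      push_cast
      rw [← h]
      exact Finset.sum_congr rfl fun pq _ => Complex.normSq_eq_conj_mul_self
    exact_mod_cast this
  funext pq
  have := (Finset.sum_eq_zero_iff_of_nonneg
    (fun pq _ => Complex.normSq_nonneg (v pq))).mp h5 pq (Finset.mem_univ pq)
  exact Complex.normSq_eq_zero.mp this

lemma Bf_span_orth {m : ℕ} {S T : Set (Fin m × Fin m → ℂ)}
    (h : ∀ u ∈ S, ∀ v ∈ T, Bf u v = 0) :
    ∀ u ∈ span ℂ S, ∀ v ∈ span ℂ T, Bf u v = 0 := by
  have step1 : ∀ u ∈ S, ∀ v ∈ span ℂ T, Bf u v = 0 := by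
    intro u hu v hv
    induction hv using Submodule.span_induction with
    | mem v hvT => exact h u hu v hvT
    | zero => exact Bf_zero_right u
    | add v w _ _ hv hw => rw [Bf_add_right, hv, hw, add_zero]
    | smul c v _ hv => rw [Bf_smul_right, hv, mul_zero]
  intro u hu
  induction hu using Submodule.span_induction with
  | mem u huS => exact step1 u huS
  | zero => exact fun v _ => Bf_zero_left v
  | add u w _ _ hu hw => intro v hv; rw [Bf_add_left, hu v hv, hw v hv, add_zero]
  | smul c u _ hu => intro v hv; rw [Bf_smul_left, hu v hv, mul_zero]

lemma card_bound {m t : ℕ} (hm : 2 ≤ m)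
    (W : Fin t → Submodule ℂ (Fin m × Fin m → ℂ))
    (hdim : ∀ a, m ≤ finrank ℂ (W a) + 1)
    (horth : ∀ a b, a ≠ b → ∀ u ∈ W a, ∀ v ∈ W b, Bf u v = 0)
    (hE : ∀ a, ∀ u ∈ W a, Bf u (Efun (m := m)) = 0) :
    t ≤ m + 1 := by
  classical
  -- pick m-1 linearly independent vectors in each W a
  have hva : ∀ a : Fin t, ∃ va : Fin (m - 1) → (Fin m × Fin m → ℂ),
      LinearIndependent ℂ va ∧ ∀ k, va k ∈ W a := by
    intro a
    obtain ⟨f, hf⟩ := exists_linearIndependent_of_le_finrank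
      (R := ℂ) (M := ↥(W a)) (n := m - 1) (by have := hdim a; omega)
    exact ⟨fun k => (f k : Fin m × Fin m → ℂ), hf.map' (W a).subtype (by simp),
      fun k => (f k).2⟩
  choose va hva_li hva_mem using hva
  -- the big family
  set F : (Fin t × Fin (m - 1)) ⊕ Unit → (Fin m × Fin m → ℂ) :=
    Sum.elim (fun ak => va ak.1 ak.2) (fun _ => Efun) with hF
  have hFli : LinearIndependent ℂ F := by
    rw [Fintype.linearIndependent_iff]
    intro c hc
    rw [Fintype.sum_sum_type] at hc
    simp only [hF, Sum.elim_inl, Sum.elim_inr] at hc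
    rw [Fintype.sum_prod_type] at hc
    set u : Fin t → (Fin m × Fin m → ℂ) :=
      fun a => ∑ k, c (Sum.inl (a, k)) • va a k with hu
    have humem : ∀ a, u a ∈ W a := fun a =>
      Submodule.sum_mem _ fun k _ => Submodule.smul_mem _ _ (hva_mem a k)
    have hceq : ∑ a, u a + c (Sum.inr ()) • Efun = 0 := by
      rw [hu]
      convert hc using 2
      simp
    have huz : ∀ a, u a = 0 := by
      intro a
      apply Bf_self_eq_zero
      have h0 : Bf (u a) (∑ b, u b + c (Sum.inr ()) • Efun) = 0 := by
        rw [hceq, Bf_zero_right]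
      rw [Bf_add_right, Bf_sum_right, Bf_smul_right] at h0
      rw [hE a (u a) (humem a), mul_zero, add_zero] at h0
      rw [Finset.sum_eq_single a (fun b _ hb => horth a b (Ne.symm hb) _ (humem a) _ (humem b))
        (fun h => absurd (Finset.mem_univ a) h)] at h0
      exact h0
    have hcl : ∀ a k, c (Sum.inl (a, k)) = 0 := by
      intro a
      exact fun k => Fintype.linearIndependent_iff.mp (hva_li a) _ (huz a) k
    have hcr : c (Sum.inr ()) = 0 := by
      have : c (Sum.inr ()) • (Efun (m := m)) = 0 := by
        rw [← hceq, Finset.sum_eq_zero fun a _ => huz a]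
        simp
      by_contra hne
      have hEz : (Efun (m := m)) = 0 := by
        have := congrArg (fun w => (c (Sum.inr ()))⁻¹ • w) this
        simpa [smul_smul, inv_mul_cancel₀ hne] using this
      have : (Efun (m := m)) (⟨0, by omega⟩, ⟨0, by omega⟩) = 1 := by simp [Efun]
      rw [hEz] at this
      simp at this
    intro s
    cases s with
    | inl ak => exact hcl ak.1 ak.2
    | inr u => cases u; exact hcr
  have hcard := hFli.fintype_card_le_finrank
  rw [Module.finrank_pi] at hcard
  simp only [Fintype.card_sum, Fintype.card_prod, Fintype.card_fin, Fintype.card_unit,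
    Fintype.card_prod] at hcard
  -- t * (m-1) + 1 ≤ m * m
  nlinarith [hcard, hm, Nat.sub_add_cancel (by omega : 1 ≤ m)]

end MubAux

open MubAux Submodule Module in
theorem mub_product_bases_bound_multipartite (n : ℕ) (hn : 0 < n) (d : Fin n → ℕ)
    (hd : ∀ j, 2 ≤ d j) (t : ℕ)
    (Ψ : Fin t → Fin (∏ j, d j) → ((j : Fin n) → Fin (d j)) → ℂ)
    (horth : ∀ j, ∀ i i' : Fin (∏ j, d j),
      (∑ a, star (Ψ j i a) * Ψ j i' a) = if i = i' then 1 else 0)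
    (hmub : ∀ j j', j ≠ j' → ∀ i i' : Fin (∏ j, d j),
      ‖∑ a, star (Ψ j i a) * Ψ j' i' a‖ = 1 / Real.sqrt (∏ j, d j))
    (hprod : ∀ j i, IsProductVectorMulti (Ψ j i)) :
    t ≤ Finset.univ.inf' (Finset.univ_nonempty_iff.mpr (Fin.pos_iff_nonempty.mp hn)) d + 1 := by
  classical
  have hD0 : 0 < ∏ j, d j := Finset.prod_pos fun j _ => by have := hd j; omega
  have hcardIdx : Fintype.card ((j : Fin n) → Fin (d j)) = ∏ j, d j := by
    rw [Fintype.card_pi]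
    exact Finset.prod_congr rfl fun j _ => Fintype.card_fin _
  have horth' : ∀ a, ∀ i i' : Fin (∏ j, d j),
      (∑ c, (starRingEnd ℂ) (Ψ a i c) * Ψ a i' c) = if i = i' then 1 else 0 := horth
  have hmub' : ∀ a b, a ≠ b → ∀ i i' : Fin (∏ j, d j),
      ‖∑ c, (starRingEnd ℂ) (Ψ a i c) * Ψ b i' c‖ = 1 / Real.sqrt (∏ j, d j) := hmub
  have hfac : ∀ a i, ∃ x : (j : Fin n) → Fin (d j) → ℂ,
      (∀ c, Ψ a i c = ∏ j, x j (c j)) ∧ ∀ j, ∑ k, (starRingEnd ℂ) (x j k) * x j k = 1 := by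
    intro a i
    apply exists_unit_factors
    · have := horth' a i i
      rwa [if_pos rfl] at this
    · exact hprod a i
  choose x hxrep hxnorm using hfac
  have hcol : ∀ a (b b' : (j : Fin n) → Fin (d j)),
      ∑ i, (starRingEnd ℂ) (Ψ a i b) * Ψ a i b' = if b = b' then 1 else 0 :=
    fun a => dual_orth hcardIdx (Ψ a) (horth' a)
  have hframe : ∀ a (j : Fin n) (p q : Fin (d j)),
      (d j : ℂ) * ∑ i, (starRingEnd ℂ) (x a i j p) * x a i j q
        = if p = q then ((∏ j, d j : ℕ) : ℂ) else 0 :=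
    fun a => frame_sum hcardIdx (Ψ a) (hcol a) (x a) (hxrep a) (hxnorm a)
  have hfactor : ∀ a b, a ≠ b → ∀ i i' (j : Fin n),
      Complex.normSq (∑ k, (starRingEnd ℂ) (x a i j k) * x b i' j k) = 1 / (d j) := by
    intro a b hab i i' j
    refine factor_unbiased rfl hD0 (x a) (x b) (hxnorm a) (hxnorm b) (hframe b) ?_ i i' j
    intro i1 i2
    have h := hmub' a b hab i1 i2
    rw [show (∑ c, (starRingEnd ℂ) (Ψ a i1 c) * Ψ b i2 c)
        = ∏ j, ∑ k, (starRingEnd ℂ) (x a i1 j k) * x b i2 j k from by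
      rw [Finset.sum_congr rfl fun c _ => by rw [hxrep a i1 c, hxrep b i2 c]]
      exact inner_factor _ _] at h
    rw [Nat.cast_prod]
    exact h
  obtain ⟨j₀, _, hj₀⟩ := Finset.exists_mem_eq_inf'
    (Finset.univ_nonempty_iff.mpr (Fin.pos_iff_nonempty.mp hn)) d
  rw [hj₀]
  have hm2 : 2 ≤ d j₀ := hd j₀
  apply card_bound hm2 (fun a =>
    span ℂ (Set.range (fun i => Mfun (x a i j₀) - ((d j₀ : ℂ))⁻¹ • Efun)))
  · intro a
    exact rank_lower hD0 (fun i => x a i j₀) (hframe a j₀) _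
  · intro a b hab
    refine Bf_span_orth ?_
    rintro _ ⟨i, rfl⟩ _ ⟨i', rfl⟩
    exact gen_orth (by omega) _ _ (hxnorm a i j₀) (hxnorm b i' j₀)
      (hfactor a b hab i i' j₀)
  · intro a u hu
    have hgen : ∀ u ∈ (Set.range fun i => Mfun (x a i j₀) - ((d j₀ : ℂ))⁻¹ • Efun),
        ∀ v ∈ ({(Efun : Fin (d j₀) × Fin (d j₀) → ℂ)} : Set _), Bf u v = 0 := by
      rintro _ ⟨i, rfl⟩ v hv
      rw [Set.mem_singleton_iff] at hv
      subst hv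
      exact gen_E_orth (by omega) _ (hxnorm a i j₀)
    exact Bf_span_orth hgen u hu Efun (Submodule.subset_span rfl)
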